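/- Let n ≥ 2 and suppose p and q are distinct primes with n/2 < p ≤ n and n/2 < q ≤ n. Then p ∈ D(G_n): there exists a maximum matching of the divisibility graph G_n that does not cover the vertex p. -/
import Mathlib


/-- `M` is a matching of `G`: a set of edges of `G`, no two of which share a vertex. -/
def IsMatching {V : Type*} (G : SimpleGraph V) (M : Finset (Sym2 V)) : Prop :=
  (∀ e ∈ M, e ∈ G.edgeSet) ∧
  ∀ e ∈ M, ∀ f ∈ M, e ≠ f → ∀ v : V, v ∈ e → v ∉ f

/-- The vertex `v` is covered by the matching `M`, i.e. it is an endpoint of an edge of `M`. -/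
def Covers {V : Type*} (M : Finset (Sym2 V)) (v : V) : Prop := ∃ e ∈ M, v ∈ e

/-- `M` is a maximum matching of `G`: a matching of maximum cardinality among all matchings. -/
def IsMaximumMatching {V : Type*} (G : SimpleGraph V) (M : Finset (Sym2 V)) : Prop :=
  IsMatching G M ∧ ∀ M' : Finset (Sym2 V), IsMatching G M' → M'.card ≤ M.card

/-- The snake-in-the-box winning predicate: `Win G S v` means the player about to move from
the position with visited set `S` and current vertex `v ∈ S` has a winning strategy.
`Win G S v` holds iff there is `w` adjacent to `v`, not yet visited, with `¬ Win G (insert w S) w`. -/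
def Win {V : Type*} [Fintype V] [DecidableEq V] (G : SimpleGraph V) (S : Finset V) (v : V) :
    Prop :=
  ∃ w : V, ∃ _ : G.Adj v w, ∃ _ : w ∉ S, ¬ Win G (insert w S) w
termination_by Sᶜ.card
decreasing_by
  simp only [Finset.compl_insert]
  exact Finset.card_erase_lt_of_mem (Finset.mem_compl.mpr (by assumption))

/-- The divisibility graph on `{1, …, n}`: distinct `i, j` are adjacent iff `i ∣ j` or `j ∣ i`. -/
def divGraph (n : ℕ) : SimpleGraph {m : ℕ // m ∈ Finset.Icc 1 n} :=
  SimpleGraph.fromRel (fun i j => (i : ℕ) ∣ (j : ℕ) ∨ (j : ℕ) ∣ (i : ℕ))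


/-- Adjacency in the divisibility graph, unfolded. -/
lemma divGraph_adj_iff {n : ℕ} (a b : {k : ℕ // k ∈ Finset.Icc 1 n}) :
    (divGraph n).Adj a b ↔ a ≠ b ∧ ((a : ℕ) ∣ (b : ℕ) ∨ (b : ℕ) ∣ (a : ℕ)) := by
  rw [divGraph, SimpleGraph.fromRel_adj]
  tauto

/-- The only neighbor of a prime `r` with `n < 2r` in the divisibility graph is `1`. -/
lemma prime_neighbor {n r : ℕ} (hr : r.Prime) (hr2 : n < 2 * r)
    (hrm : r ∈ Finset.Icc 1 n) (h1n : (1 : ℕ) ∈ Finset.Icc 1 n)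
    (w : {k : ℕ // k ∈ Finset.Icc 1 n}) (hadj : (divGraph n).Adj ⟨r, hrm⟩ w) :
    w = ⟨1, h1n⟩ := by
  rw [divGraph_adj_iff] at hadj
  obtain ⟨hne, h | h⟩ := hadj
  · exfalso
    have hw := Finset.mem_Icc.mp w.2
    have hwr : (w : ℕ) = r :=
      Nat.eq_of_dvd_of_lt_two_mul (by omega) h (by omega)
    exact hne (Subtype.ext hwr.symm)
  · rcases hr.eq_one_or_self_of_dvd _ h with h1 | h1
    · exact Subtype.ext h1
    · exact absurd (Subtype.ext h1) hne.symm

/-- If `p, q` are distinct primes with `n/2 < p ≤ n` and `n/2 < q ≤ n`, then `p ∈ D(Gₙ)`: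
some maximum matching of the divisibility graph `Gₙ` does not cover `p`. -/
theorem large_prime_mem_D (n p q : ℕ) (hn : 2 ≤ n)
    (hp : p.Prime) (hq : q.Prime) (hpq : p ≠ q)
    (hp1 : n < 2 * p) (hp2 : p ≤ n) (hq1 : n < 2 * q) (hq2 : q ≤ n) :
    ∃ M : Finset (Sym2 {k : ℕ // k ∈ Finset.Icc 1 n}),
      IsMaximumMatching (divGraph n) M ∧
        ¬ Covers M (⟨p, Finset.mem_Icc.mpr ⟨hp.one_lt.le, hp2⟩⟩ :
          {k : ℕ // k ∈ Finset.Icc 1 n}) := by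
  classical
  have h1n : (1 : ℕ) ∈ Finset.Icc 1 n := Finset.mem_Icc.mpr ⟨le_rfl, by omega⟩
  have hpm : p ∈ Finset.Icc 1 n := Finset.mem_Icc.mpr ⟨hp.one_lt.le, hp2⟩
  have hqm : q ∈ Finset.Icc 1 n := Finset.mem_Icc.mpr ⟨hq.one_lt.le, hq2⟩
  set P : {k : ℕ // k ∈ Finset.Icc 1 n} := ⟨p, hpm⟩ with hPdef
  set Q : {k : ℕ // k ∈ Finset.Icc 1 n} := ⟨q, hqm⟩ with hQdef
  set One : {k : ℕ // k ∈ Finset.Icc 1 n} := ⟨1, h1n⟩ with hOnedef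
  have hPOne : P ≠ One := fun h => hp.one_lt.ne' (congrArg Subtype.val h)
  have hQOne : Q ≠ One := fun h => hq.one_lt.ne' (congrArg Subtype.val h)
  have hPQ : P ≠ Q := fun h => hpq (congrArg Subtype.val h)
  -- get a maximum matching
  obtain ⟨M, hMmem, hMmax⟩ := Finset.exists_max_image
    (Finset.univ.filter (fun M => IsMatching (divGraph n) M)) Finset.card
    ⟨∅, Finset.mem_filter.mpr ⟨Finset.mem_univ _,
      ⟨fun e he => absurd he (Finset.notMem_empty e),
       fun e he => absurd he (Finset.notMem_empty e)⟩⟩⟩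
  have hM : IsMatching (divGraph n) M := (Finset.mem_filter.mp hMmem).2
  have hMmax' : ∀ M', IsMatching (divGraph n) M' → M'.card ≤ M.card := by
    intro M' hM'
    exact hMmax M' (Finset.mem_filter.mpr ⟨Finset.mem_univ _, hM'⟩)
  by_cases hcov : Covers M P
  · -- p is covered; the covering edge must be s(1, p). Swap it for s(1, q).
    obtain ⟨e, heM, hPe⟩ := hcov
    obtain ⟨w, hew⟩ := Sym2.mem_iff_exists.mp hPe
    have hadj : (divGraph n).Adj P w := by
      have := hM.1 e heM
      rw [hew, SimpleGraph.mem_edgeSet] at this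
      exact this
    have hwOne : w = One := prime_neighbor hp hp1 hpm h1n w hadj
    subst hwOne
    -- key fact: no edge of M.erase e contains One or Q
    have haux : ∀ f ∈ M.erase e, One ∉ f ∧ Q ∉ f := by
      intro f hf
      have hfM := Finset.mem_of_mem_erase hf
      have hfe : e ≠ f := fun h => (Finset.ne_of_mem_erase hf) h.symm
      have hOne : One ∉ f := by
        have := hM.2 e heM f hfM hfe One
        exact this (by rw [hew]; exact Sym2.mem_mk_right _ _)
      refine ⟨hOne, fun hQf => ?_⟩
      obtain ⟨w', hfw⟩ := Sym2.mem_iff_exists.mp hQf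
      have hadjQ : (divGraph n).Adj Q w' := by
        have := hM.1 f hfM
        rw [hfw, SimpleGraph.mem_edgeSet] at this
        exact this
      have : w' = One := prime_neighbor hq hq1 hqm h1n w' hadjQ
      rw [this] at hfw
      exact hOne (by rw [hfw]; exact Sym2.mem_mk_right _ _)
    have hnew : s(One, Q) ∉ M.erase e := fun h =>
      (haux _ h).1 (Sym2.mem_mk_left _ _)
    set M' : Finset (Sym2 {k : ℕ // k ∈ Finset.Icc 1 n}) :=
      insert s(One, Q) (M.erase e) with hM'def
    have hOneQadj : (divGraph n).Adj One Q :=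
      (divGraph_adj_iff One Q).mpr ⟨hQOne.symm, Or.inl (one_dvd _)⟩
    have hM'match : IsMatching (divGraph n) M' := by
      constructor
      · intro f hf
        rcases Finset.mem_insert.mp hf with h | h
        · rw [h, SimpleGraph.mem_edgeSet]; exact hOneQadj
        · exact hM.1 f (Finset.mem_of_mem_erase h)
      · intro f hf g hg hfg v hvf
        rcases Finset.mem_insert.mp hf with h | h <;>
          rcases Finset.mem_insert.mp hg with h' | h'
        · exact absurd (h.trans h'.symm) hfg
        · intro hvg
          rw [h] at hvf
          rcases Sym2.mem_iff.mp hvf with rfl | rfl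
          · exact (haux g h').1 hvg
          · exact (haux g h').2 hvg
        · intro hvg
          rw [h'] at hvg
          rcases Sym2.mem_iff.mp hvg with rfl | rfl
          · exact (haux f h).1 hvf
          · exact (haux f h).2 hvf
        · exact hM.2 f (Finset.mem_of_mem_erase h) g (Finset.mem_of_mem_erase h') hfg v hvf
    have hcard : M'.card = M.card := by
      rw [hM'def, Finset.card_insert_of_notMem hnew, Finset.card_erase_of_mem heM]
      have : 0 < M.card := Finset.card_pos.mpr ⟨e, heM⟩
      omega
    refine ⟨M', ⟨hM'match, fun M'' hM'' => hcard ▸ hMmax' M'' hM''⟩, ?_⟩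
    rintro ⟨f, hf, hPf⟩
    rcases Finset.mem_insert.mp hf with h | h
    · rw [h] at hPf
      rcases Sym2.mem_iff.mp hPf with h' | h'
      · exact hPOne h'
      · exact hPQ h'
    · have hfe : e ≠ f := fun hh => (Finset.ne_of_mem_erase h) hh.symm
      exact hM.2 e heM f (Finset.mem_of_mem_erase h) hfe P hPe hPf
  · exact ⟨M, ⟨hM, hMmax'⟩, hcov⟩
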